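/- For every natural number n there exists a natural number n₀, depending only on n, with the following property. Let Q and S be disjoint sets and let R ⊆ Q × Q × S; for a, b ∈ Q write R(a,b) = {s ∈ S : (a,b,s) ∈ R}. Suppose that for all a, b, c ∈ Q one has R(a,b) = R(b,a), R(a,b) ⊆ R(a,c) ∪ R(b,c), R(a,a) = ∅, and |R(a,b)| ≤ n. Then there exist a subset S₀ ⊆ S with |S₀| ≤ n₀ and a relation T ⊆ Q × S with 2·|T(a)| ≤ n for every a ∈ Q (where T(a) = {s ∈ S : (a,s) ∈ T}), such that, setting S′ = S ∖ S₀ and R′(a,b) = R(a,b) ∩ S′, one has T(a) △ T(b) ⊆ R′(a,b) ⊆ T(a) ∪ T(b) for all a, b ∈ Q. -/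

import Mathlib

universe u v

/-- combinatorial content of Lemma 6.2 of Haskell–Hrushovski–Macpherson.
For every `n` there is `n₀` (depending only on `n`) such that for any sets `Q`, `S`
(disjointness is automatic since they are distinct types) and any relation
`R ⊆ Q × Q × S`, written as `R : Q → Q → Set S`, satisfying symmetry, the triangle
inclusion `R a b ⊆ R a c ∪ R b c`, `R a a = ∅`, and `|R a b| ≤ n`, there are
`S₀ ⊆ S` with `|S₀| ≤ n₀` and `T ⊆ Q × S` (written `T : Q → Set S`) with
`2 * |T a| ≤ n`, such that, with `S' = S \ S₀` and `R' a b = R a b ∩ S'`,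
`T a △ T b ⊆ R' a b ⊆ T a ∪ T b` for all `a b`.  (The symmetric difference is written
as the union of the two set differences.) -/
theorem combinatorial_lemma (n : ℕ) :
    ∃ n₀ : ℕ, ∀ (Q : Type u) (S : Type v) (R : Q → Q → Set S),
      (∀ a b : Q, R a b = R b a) →
      (∀ a b c : Q, R a b ⊆ R a c ∪ R b c) →
      (∀ a : Q, R a a = ∅) →
      (∀ a b : Q, (R a b).Finite) →
      (∀ a b : Q, (R a b).ncard ≤ n) →
      ∃ (S₀ : Set S) (T : Q → Set S),
        S₀.Finite ∧ S₀.ncard ≤ n₀ ∧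
        (∀ a : Q, (T a).Finite) ∧ (∀ a : Q, 2 * (T a).ncard ≤ n) ∧
        ∀ a b : Q,
          (T a \ T b) ∪ (T b \ T a) ⊆ R a b \ S₀ ∧ R a b \ S₀ ⊆ T a ∪ T b := by
  refine ⟨n, fun Q S R hsymm htri hrefl hfin hcard => ?_⟩
  rcases isEmpty_or_nonempty Q with hQ | hQ
  · exact ⟨∅, fun _ => ∅, Set.finite_empty, by simp, fun a => Set.finite_empty,
      fun a => by simp, fun a => (hQ.elim a)⟩
  obtain ⟨a0⟩ := hQ
  -- choose a pair (a, b) maximizing the (bounded) cardinality of `R a b`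
  have hbdd : BddAbove (Set.range fun p : Q × Q => (R p.1 p.2).ncard) :=
    ⟨n, by rintro k ⟨p, rfl⟩; exact hcard p.1 p.2⟩
  have hne : (Set.range fun p : Q × Q => (R p.1 p.2).ncard).Nonempty :=
    ⟨_, ⟨(a0, a0), rfl⟩⟩
  obtain ⟨⟨a, b⟩, hp⟩ := Nat.sSup_mem hne hbdd
  have hmax : ∀ c d : Q, (R c d).ncard ≤ (R a b).ncard := by
    intro c d
    have hp' : (R a b).ncard = sSup (Set.range fun p : Q × Q => (R p.1 p.2).ncard) := hp
    rw [hp']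
    exact le_csSup hbdd ⟨(c, d), rfl⟩
  set X := R a b with hX
  -- the key fact: off `X`, `R a c` and `R b c` agree
  have heq : ∀ c : Q, R b c \ X = R a c \ X := by
    intro c
    ext s
    constructor
    · rintro ⟨hs1, hs2⟩
      rcases htri b c a hs1 with h | h
      · rw [hsymm b a] at h; exact absurd h hs2
      · rw [hsymm c a] at h; exact ⟨h, hs2⟩
    · rintro ⟨hs1, hs2⟩
      rcases htri a c b hs1 with h | h
      · exact absurd h hs2
      · rw [hsymm c b] at h; exact ⟨h, hs2⟩
  refine ⟨X, fun c => R a c \ X, hfin a b, hcard a b, fun c => (hfin a c).diff, ?_, ?_⟩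
  · -- cardinality bound : 2 * |R a c \ X| ≤ n
    intro c
    show 2 * (R a c \ X).ncard ≤ n
    have h1 : (R a c ∩ X).ncard + (R a c \ X).ncard = (R a c).ncard :=
      Set.ncard_inter_add_ncard_diff_eq_ncard _ _ (hfin a c)
    have h2 : (R b c ∩ X).ncard + (R b c \ X).ncard = (R b c).ncard :=
      Set.ncard_inter_add_ncard_diff_eq_ncard _ _ (hfin b c)
    have hXsub : X = (R a c ∩ X) ∪ (R b c ∩ X) := by
      ext s
      constructor
      · intro hs
        rcases htri a b c hs with h | h
        · exact Or.inl ⟨h, hs⟩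
        · exact Or.inr ⟨h, hs⟩
      · rintro (⟨_, hs⟩ | ⟨_, hs⟩) <;> exact hs
    have h3 : X.ncard ≤ (R a c ∩ X).ncard + (R b c ∩ X).ncard := by
      conv_lhs => rw [hXsub]
      exact Set.ncard_union_le _ _
    have h4 : (R b c \ X).ncard = (R a c \ X).ncard := by rw [heq c]
    have h5 : (R a c).ncard ≤ X.ncard := hmax a c
    have h6 : (R b c).ncard ≤ X.ncard := hmax b c
    have h7 : X.ncard ≤ n := hcard a b
    omega
  · intro c d
    constructor
    · rintro s (⟨⟨h1, h2⟩, h3⟩ | ⟨⟨h1, h2⟩, h3⟩)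
      · have h4 : s ∉ R a d := fun h => h3 ⟨h, h2⟩
        rcases htri a c d h1 with h | h
        · exact absurd h h4
        · exact ⟨h, h2⟩
      · have h4 : s ∉ R a c := fun h => h3 ⟨h, h2⟩
        rcases htri a d c h1 with h | h
        · exact absurd h h4
        · rw [hsymm d c] at h; exact ⟨h, h2⟩
    · rintro s ⟨h1, h2⟩
      rcases htri c d a h1 with h | h
      · rw [hsymm c a] at h; exact Or.inl ⟨h, h2⟩
      · rw [hsymm d a] at h; exact Or.inr ⟨h, h2⟩
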